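/- For every integer P≥2, there exists a spooky pebbling strategy on the grid DAG G◇_P with pebbling cost at most P+1. -/

import Mathlib

variable {V : Type*}

/-- The set of roots (vertices with out-degree 0) of the graph with edge relation `E`. -/
noncomputable def rootFinset [Finite V] (E : V → V → Prop) : Finset V :=
  (Set.toFinite {v | ∀ w, ¬ E v w}).toFinset

/-- One move of the irreversible pebble game: pebble a vertex whose direct
predecessors are all pebbled, or unpebble any vertex. -/
def IrrevStep [DecidableEq V] (E : V → V → Prop) (A B : Finset V) : Prop :=
  ∃ v : V, (B = insert v A ∧ ∀ w, E w v → w ∈ A) ∨ B = A.erase v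

/-- An irreversible pebbling strategy with pebbling time `T`. -/
def IsIrrevStrategy [Finite V] [DecidableEq V] (E : V → V → Prop)
    (P : ℕ → Finset V) (T : ℕ) : Prop :=
  P 0 = ∅ ∧ P T = rootFinset E ∧
    ∀ t, 1 ≤ t → t ≤ T → IrrevStep E (P (t - 1)) (P t)

/-- One move of the spooky pebble game: pebble, unpebble, ghost or unghost. -/
def SpookyStep [DecidableEq V] (E : V → V → Prop) (A B SA SB : Finset V) : Prop :=
  ∃ v : V,
    (B = insert v A ∧ SB = SA ∧ ∀ w, E w v → w ∈ A) ∨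
    (B = A.erase v ∧ SB = SA ∧ ∀ w, E w v → w ∈ A) ∨
    (B = A.erase v ∧ SB = insert v SA) ∨
    (B = insert v A ∧ SB = SA.erase v ∧ ∀ w, E w v → w ∈ A)

/-- A spooky pebbling sub-strategy: the move rules hold, with no boundary conditions. -/
def IsSpookySubStrategy [DecidableEq V] (E : V → V → Prop)
    (P S : ℕ → Finset V) (T : ℕ) : Prop :=
  ∀ t, 1 ≤ t → t ≤ T → SpookyStep E (P (t - 1)) (P t) (S (t - 1)) (S t)

/-- A spooky pebbling strategy with pebbling time `T`. -/
def IsSpookyStrategy [Finite V] [DecidableEq V] (E : V → V → Prop)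
    (P S : ℕ → Finset V) (T : ℕ) : Prop :=
  P 0 = ∅ ∧ S 0 = ∅ ∧ P T = rootFinset E ∧ S T = ∅ ∧
    IsSpookySubStrategy E P S T

/-- The pebbling cost of a strategy of time `T`: the maximal number of pebbles used. -/
def pebCost (P : ℕ → Finset V) (T : ℕ) : ℕ :=
  (Finset.range (T + 1)).sup fun t => (P t).card

/-- The ghosting cost of a spooky strategy of time `T`: the maximal number of ghosts used. -/
def ghostCost (S : ℕ → Finset V) (T : ℕ) : ℕ :=
  (Finset.range (T + 1)).sup fun t => (S t).card

/-- Acyclicity of the edge relation: no directed cycles. -/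
def Acyclic (E : V → V → Prop) : Prop := ∀ v, ¬ Relation.TransGen E v v

/-- The grid DAG `G◇_P` on vertex set `Fin P × Fin P` (0-indexed, so the leaf “(1,1)”
is `(0,0)` and the root “(P,P)” is `(P-1,P-1)`), with edges `(i,j)→(i+1,j)` and
`(i,j)→(i,j+1)`. -/
def gridE (P : ℕ) (a b : Fin P × Fin P) : Prop :=
  ((b.1 : ℕ) = (a.1 : ℕ) + 1 ∧ b.2 = a.2) ∨
  (b.1 = a.1 ∧ (b.2 : ℕ) = (a.2 : ℕ) + 1)

namespace SpookyGrid

abbrev Vtx (n : ℕ) := Fin n × Fin n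
abbrev Stn (n : ℕ) := Finset (Vtx n) × Finset (Vtx n)

def Ok (n : ℕ) (s s' : Stn n) : Prop := SpookyStep (gridE n) s.1 s'.1 s.2 s'.2

def Seg (n c : ℕ) (s₀ s₁ : Stn n) : Prop :=
  ∃ (f : ℕ → Stn n) (T : ℕ), f 0 = s₀ ∧ f T = s₁ ∧
    (∀ t, t < T → Ok n (f t) (f (t+1))) ∧ (∀ t, t ≤ T → (f t).1.card ≤ c)

namespace Seg

theorem refl {n c : ℕ} {s : Stn n} (h : s.1.card ≤ c) : Seg n c s s :=
  ⟨fun _ => s, 0, rfl, rfl, fun t ht => by omega, fun _ _ => h⟩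

theorem trans {n c : ℕ} {s₀ s₁ s₂ : Stn n} (h1 : Seg n c s₀ s₁) (h2 : Seg n c s₁ s₂) :
    Seg n c s₀ s₂ := by
  obtain ⟨f, T, hf0, hfT, hstep, hcard⟩ := h1
  obtain ⟨g, U, hg0, hgU, hgstep, hgcard⟩ := h2
  refine ⟨fun t => if t ≤ T then f t else g (t - T), T + U, by simpa, ?_, ?_, ?_⟩
  · by_cases h : T + U ≤ T
    · have hU : U = 0 := by omega
      have h2 : T + U = T := by omega
      subst hU
      simp only [Nat.add_zero, le_refl, if_pos, hfT, ← hg0, ← hgU]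
    · simp only [if_neg h, Nat.add_sub_cancel_left, hgU]
  · intro t ht
    by_cases h1t : t + 1 ≤ T
    · simpa [show t ≤ T by omega, h1t] using hstep t (by omega)
    · by_cases h2t : t ≤ T
      · have hteq : t = T := by omega
        have h3 : t + 1 - T = 0 + 1 := by omega
        simp only [if_pos h2t, if_neg h1t, h3]
        subst hteq
        have := hgstep 0 (by omega)
        rw [hg0, ← hfT] at this
        simpa using this
      · have h3 : t + 1 - T = (t - T) + 1 := by omega
        simp only [if_neg h2t, if_neg h1t, h3]
        exact hgstep (t - T) (by omega)
  · intro t ht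
    by_cases h2t : t ≤ T
    · simpa [h2t] using hcard t h2t
    · simp only [if_neg h2t]
      exact hgcard (t - T) (by omega)

theorem single {n c : ℕ} {s₀ s₁ : Stn n} (h : Ok n s₀ s₁)
    (h0 : s₀.1.card ≤ c) (h1 : s₁.1.card ≤ c) : Seg n c s₀ s₁ := by
  refine ⟨fun t => if t = 0 then s₀ else s₁, 1, by simp, by simp, ?_, ?_⟩
  · intro t ht
    have : t = 0 := by omega
    simpa [this] using h
  · intro t _
    by_cases h : t = 0 <;> simp [h, h0, h1]

theorem cast {n c : ℕ} {s₀ s₁ s₁' : Stn n} (h : Seg n c s₀ s₁) (he : s₁ = s₁') :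
    Seg n c s₀ s₁' := he ▸ h

theorem cast' {n c : ℕ} {s₀ s₀' s₁ : Stn n} (h : Seg n c s₀ s₁) (he : s₀ = s₀') :
    Seg n c s₀' s₁ := he ▸ h

end Seg


section Moves

variable {n : ℕ}

theorem gridE_pred {w : Vtx n} {i j : ℕ} (hi : i < n) (hj : j < n)
    (h : gridE n w (⟨i, hi⟩, ⟨j, hj⟩)) :
    ((w.1 : ℕ) + 1 = i ∧ (w.2 : ℕ) = j) ∨ ((w.1 : ℕ) = i ∧ (w.2 : ℕ) + 1 = j) := by
  rcases h with ⟨h1, h2⟩ | ⟨h1, h2⟩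
  · left
    exact ⟨by simpa using h1.symm, by simpa [Fin.ext_iff] using h2.symm⟩
  · right
    exact ⟨by simpa [Fin.ext_iff] using h1.symm, by simpa using h2.symm⟩

theorem ok_unghost {A S : Finset (Vtx n)} (v : Vtx n)
    (hpred : ∀ w, gridE n w v → w ∈ A) :
    Ok n (A, S) (insert v A, S.erase v) :=
  ⟨v, Or.inr (Or.inr (Or.inr ⟨rfl, rfl, hpred⟩))⟩

theorem ok_ghost {A S : Finset (Vtx n)} (v : Vtx n) :
    Ok n (A, S) (A.erase v, insert v S) :=
  ⟨v, Or.inr (Or.inr (Or.inl ⟨rfl, rfl⟩))⟩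

theorem ok_unpebble {A S : Finset (Vtx n)} (v : Vtx n)
    (hpred : ∀ w, gridE n w v → w ∈ A) :
    Ok n (A, S) (A.erase v, S) :=
  ⟨v, Or.inr (Or.inl ⟨rfl, rfl, hpred⟩)⟩

end Moves

section Sets

variable {n : ℕ}

def rectF (n a b : ℕ) : Finset (Vtx n) :=
  Finset.univ.filter fun v => (v.1 : ℕ) ≤ a ∧ (v.2 : ℕ) ≤ b

def rowPre (n i j : ℕ) : Finset (Vtx n) :=
  Finset.univ.filter fun v => (v.1 : ℕ) = i ∧ (v.2 : ℕ) ≤ j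

def midSet (n i j b : ℕ) : Finset (Vtx n) :=
  Finset.univ.filter fun v =>
    ((v.1 : ℕ) = i + 1 ∧ (v.2 : ℕ) ≤ j) ∨ ((v.1 : ℕ) = i ∧ j + 1 ≤ (v.2 : ℕ) ∧ (v.2 : ℕ) ≤ b)

def gSet (n a b : ℕ) : Finset (Vtx n) :=
  Finset.univ.filter fun v =>
    ((v.1 : ℕ) = a ∧ (v.2 : ℕ) ≤ b) ∨ ((v.1 : ℕ) + 1 = a ∧ (v.2 : ℕ) = b)

def eSet (n s k : ℕ) : Finset (Vtx n) :=
  Finset.univ.filter fun v =>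
    (v.1 : ℕ) + (v.2 : ℕ) < s ∨ ((v.1 : ℕ) + (v.2 : ℕ) = s ∧ (v.1 : ℕ) < k)

@[simp] theorem mem_rectF {v : Vtx n} {a b : ℕ} :
    v ∈ rectF n a b ↔ (v.1 : ℕ) ≤ a ∧ (v.2 : ℕ) ≤ b := by simp [rectF]

@[simp] theorem mem_rowPre {v : Vtx n} {i j : ℕ} :
    v ∈ rowPre n i j ↔ (v.1 : ℕ) = i ∧ (v.2 : ℕ) ≤ j := by simp [rowPre]

@[simp] theorem mem_midSet {v : Vtx n} {i j b : ℕ} :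
    v ∈ midSet n i j b ↔
      ((v.1 : ℕ) = i + 1 ∧ (v.2 : ℕ) ≤ j) ∨
      ((v.1 : ℕ) = i ∧ j + 1 ≤ (v.2 : ℕ) ∧ (v.2 : ℕ) ≤ b) := by simp [midSet]

@[simp] theorem mem_gSet {v : Vtx n} {a b : ℕ} :
    v ∈ gSet n a b ↔
      ((v.1 : ℕ) = a ∧ (v.2 : ℕ) ≤ b) ∨ ((v.1 : ℕ) + 1 = a ∧ (v.2 : ℕ) = b) := by simp [gSet]

@[simp] theorem mem_eSet {v : Vtx n} {s k : ℕ} :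
    v ∈ eSet n s k ↔
      (v.1 : ℕ) + (v.2 : ℕ) < s ∨ ((v.1 : ℕ) + (v.2 : ℕ) = s ∧ (v.1 : ℕ) < k) := by simp [eSet]

theorem card_rowPre {i j : ℕ} : (rowPre n i j).card ≤ j + 1 := by
  have := Finset.card_le_card_of_injOn (fun v : Vtx n => (v.2 : ℕ))
    (s := rowPre n i j) (t := Finset.range (j + 1))
    (by intro v hv; simp at hv ⊢; omega)
    (by
      intro v hv w hw hvw
      simp only [Finset.mem_coe, mem_rowPre] at hv hw
      have h2 : (v.2 : ℕ) = (w.2 : ℕ) := hvw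
      have h1 : (v.1 : ℕ) = (w.1 : ℕ) := by omega
      exact Prod.ext_iff.2 ⟨Fin.ext h1, Fin.ext h2⟩)
  simpa using this

theorem card_midSet {i j b : ℕ} (hj : j ≤ b) : (midSet n i j b).card ≤ b + 1 := by
  have := Finset.card_le_card_of_injOn (fun v : Vtx n => (v.2 : ℕ))
    (s := midSet n i j b) (t := Finset.range (b + 1))
    (by intro v hv; simp at hv ⊢; omega)
    (by
      intro v hv w hw hvw
      simp only [Finset.mem_coe, mem_midSet] at hv hw
      have h2 : (v.2 : ℕ) = (w.2 : ℕ) := hvw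
      have h1 : (v.1 : ℕ) = (w.1 : ℕ) := by omega
      exact Prod.ext_iff.2 ⟨Fin.ext h1, Fin.ext h2⟩)
  simpa using this

theorem card_gSet {a b : ℕ} : (gSet n a b).card ≤ b + 2 := by
  have := Finset.card_le_card_of_injOn
    (fun v : Vtx n => if (v.1 : ℕ) = a then (v.2 : ℕ) else b + 1)
    (s := gSet n a b) (t := Finset.range (b + 2))
    (by intro v hv; simp only [Finset.mem_coe, mem_gSet] at hv; simp only [Finset.mem_coe, Finset.mem_range]; split <;> omega)
    (by
      intro v hv w hw hvw
      simp only [Finset.mem_coe, mem_gSet] at hv hw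
      simp only at hvw
      have h12 : (v.1 : ℕ) = (w.1 : ℕ) ∧ (v.2 : ℕ) = (w.2 : ℕ) := by
        split at hvw <;> split at hvw <;> omega
      exact Prod.ext_iff.2 ⟨Fin.ext h12.1, Fin.ext h12.2⟩)
  simpa using this

end Sets

section GhostAll

variable {n : ℕ}

theorem ghostAll {c : ℕ} (X : Finset (Vtx n)) :
    ∀ (A S : Finset (Vtx n)), A.card ≤ c → Seg n c (A, S) (A \ X, S ∪ X) := by
  classical
  induction X using Finset.induction_on with
  | empty => intro A S h; exact (Seg.refl h).cast (by simp)
  | insert x X hx ih =>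
    intro A S h
    have m1 : Seg n c (A, S) (A.erase x, insert x S) :=
      Seg.single (ok_ghost x) h (le_trans (Finset.card_erase_le) h)
    have m2 := ih (A.erase x) (insert x S) (le_trans (Finset.card_erase_le) h)
    refine (m1.trans m2).cast ?_
    have e1 : A.erase x \ X = A \ insert x X := by
      ext v; simp [Finset.mem_erase, Finset.mem_sdiff]; tauto
    have e2 : insert x S ∪ X = S ∪ insert x X := by
      ext v
      simp only [Finset.mem_insert, Finset.mem_union]
      tauto
    rw [e1, e2]

end GhostAll


section Sweep

variable {n c : ℕ}

theorem cardU {H X : Finset (Vtx n)} {m : ℕ} (hX : X.card ≤ m) :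
    (H ∪ X).card ≤ H.card + m :=
  le_trans (Finset.card_union_le _ _) (by omega)

theorem firstRow {b : ℕ} (hb : b < n) (H S₀ : Finset (Vtx n))
    (hc : H.card + (b + 2) ≤ c) :
    ∀ j, j ≤ b → Seg n c (H, S₀) (H ∪ rowPre n 0 j, S₀ \ rowPre n 0 j) := by
  intro j hj
  induction j with
  | zero =>
    have h0 : (0 : ℕ) < n := by omega
    set v : Vtx n := (⟨0, h0⟩, ⟨0, h0⟩) with hv
    have hpred : ∀ w, gridE n w v → w ∈ H := by
      intro w hw
      rcases gridE_pred h0 h0 hw with ⟨h1, _⟩ | ⟨_, h2⟩ <;> omega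
    refine (Seg.single (ok_unghost v hpred) (by show H.card ≤ c; omega) ?_).cast ?_
    · show (insert v H).card ≤ c
      have := Finset.card_insert_le v H
      omega
    · refine Prod.ext_iff.2 ⟨?_, ?_⟩
      · show insert v H = H ∪ rowPre n 0 0
        ext ⟨x, y⟩
        by_cases hxy : (x, y) ∈ H <;>
          simp [hxy, hv, Prod.ext_iff, Fin.ext_iff] <;> omega
      · show S₀.erase v = S₀ \ rowPre n 0 0
        ext ⟨x, y⟩
        by_cases hxy : (x, y) ∈ S₀ <;>
          simp [hxy, hv, Prod.ext_iff, Fin.ext_iff] <;> omega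
  | succ j ih =>
    have hjn : j + 1 < n := by omega
    have h0 : (0 : ℕ) < n := by omega
    set v : Vtx n := (⟨0, h0⟩, ⟨j + 1, hjn⟩) with hv
    have hpred : ∀ w, gridE n w v → w ∈ H ∪ rowPre n 0 j := by
      intro w hw
      rcases gridE_pred h0 hjn hw with ⟨h1, _⟩ | ⟨h1, h2⟩
      · omega
      · exact Finset.mem_union_right _ (by simp; omega)
    refine ((ih (by omega)).trans ((Seg.single (ok_unghost v hpred) ?_ ?_).cast ?_))
    · show (H ∪ rowPre n 0 j).card ≤ c
      have := cardU (H := H) (card_rowPre (n := n) (i := 0) (j := j))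
      omega
    · show (insert v (H ∪ rowPre n 0 j)).card ≤ c
      have := Finset.card_insert_le v (H ∪ rowPre n 0 j)
      have := cardU (H := H) (card_rowPre (n := n) (i := 0) (j := j))
      omega
    · refine Prod.ext_iff.2 ⟨?_, ?_⟩
      · show insert v (H ∪ rowPre n 0 j) = H ∪ rowPre n 0 (j + 1)
        ext ⟨x, y⟩
        by_cases hxy : (x, y) ∈ H <;>
          simp [hxy, hv, Prod.ext_iff, Fin.ext_iff] <;> omega
      · show (S₀ \ rowPre n 0 j).erase v = S₀ \ rowPre n 0 (j + 1)
        ext ⟨x, y⟩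
        by_cases hxy : (x, y) ∈ S₀ <;>
          simp [hxy, hv, Prod.ext_iff, Fin.ext_iff] <;> omega

theorem transSeg {b i : ℕ} (hi1 : i + 1 < n) (hb : b < n)
    (H S : Finset (Vtx n)) (hc : H.card + (b + 2) ≤ c)
    (hH : ∀ v ∈ H, ¬((v.1 : ℕ) = i ∧ (v.2 : ℕ) ≤ b)) :
    ∀ j, j ≤ b → Seg n c (H ∪ rowPre n i b, S)
      (H ∪ midSet n i j b, (S \ rowPre n (i+1) j) ∪ rowPre n i j) := by
  have hi : i < n := by omega
  have hcard1 : (H ∪ rowPre n i b).card ≤ c := by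
    have := cardU (H := H) (card_rowPre (n := n) (i := i) (j := b))
    omega
  intro j hj
  induction j with
  | zero =>
    have h0 : (0 : ℕ) < n := by omega
    set v1 : Vtx n := (⟨i + 1, hi1⟩, ⟨0, h0⟩) with hv1
    set v2 : Vtx n := (⟨i, hi⟩, ⟨0, h0⟩) with hv2
    have hpred : ∀ w, gridE n w v1 → w ∈ H ∪ rowPre n i b := by
      intro w hw
      rcases gridE_pred hi1 h0 hw with ⟨h1, h2⟩ | ⟨h1, h2⟩
      · exact Finset.mem_union_right _ (by simp; omega)
      · omega
    have hmid : (insert v1 (H ∪ rowPre n i b)).card ≤ c := by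
      have := Finset.card_insert_le v1 (H ∪ rowPre n i b)
      have := cardU (H := H) (card_rowPre (n := n) (i := i) (j := b))
      omega
    refine ((Seg.single (ok_unghost v1 hpred) hcard1 hmid).trans
      ((Seg.single (ok_ghost v2) hmid ?_).cast ?_))
    · exact le_trans (Finset.card_erase_le) hmid
    · refine Prod.ext_iff.2 ⟨?_, ?_⟩
      · show (insert v1 (H ∪ rowPre n i b)).erase v2 = H ∪ midSet n i 0 b
        ext ⟨x, y⟩
        by_cases hxy : (x, y) ∈ H
        · have hne : ¬((x : ℕ) = i ∧ (y : ℕ) ≤ b) := hH (x, y) hxy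
          simp [hxy, hv1, hv2, Prod.ext_iff, Fin.ext_iff]
          omega
        · simp [hxy, hv1, hv2, Prod.ext_iff, Fin.ext_iff]
          omega
      · show insert v2 (S.erase v1) = (S \ rowPre n (i+1) 0) ∪ rowPre n i 0
        ext ⟨x, y⟩
        by_cases hxy : (x, y) ∈ S <;>
          simp [hxy, hv1, hv2, Prod.ext_iff, Fin.ext_iff] <;> omega
  | succ j ih =>
    have hjn : j + 1 < n := by omega
    set v1 : Vtx n := (⟨i + 1, hi1⟩, ⟨j + 1, hjn⟩) with hv1
    set v2 : Vtx n := (⟨i, hi⟩, ⟨j + 1, hjn⟩) with hv2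
    have hpred : ∀ w, gridE n w v1 → w ∈ H ∪ midSet n i j b := by
      intro w hw
      rcases gridE_pred hi1 hjn hw with ⟨h1, h2⟩ | ⟨h1, h2⟩
      · exact Finset.mem_union_right _ (by simp; omega)
      · exact Finset.mem_union_right _ (by simp; omega)
    have hcmid : (H ∪ midSet n i j b).card ≤ c := by
      have := cardU (H := H) (card_midSet (n := n) (i := i) (b := b) (show j ≤ b by omega))
      omega
    have hcmid2 : (insert v1 (H ∪ midSet n i j b)).card ≤ c := by
      have := Finset.card_insert_le v1 (H ∪ midSet n i j b)
      have := cardU (H := H) (card_midSet (n := n) (i := i) (b := b) (show j ≤ b by omega))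
      omega
    refine ((ih (by omega)).trans
      (((Seg.single (ok_unghost v1 hpred) hcmid hcmid2).trans
        ((Seg.single (ok_ghost v2) hcmid2 ?_).cast ?_))))
    · exact le_trans (Finset.card_erase_le) hcmid2
    · refine Prod.ext_iff.2 ⟨?_, ?_⟩
      · show (insert v1 (H ∪ midSet n i j b)).erase v2 = H ∪ midSet n i (j+1) b
        ext ⟨x, y⟩
        by_cases hxy : (x, y) ∈ H
        · have hne : ¬((x : ℕ) = i ∧ (y : ℕ) ≤ b) := hH (x, y) hxy
          simp [hxy, hv1, hv2, Prod.ext_iff, Fin.ext_iff]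
          omega
        · simp [hxy, hv1, hv2, Prod.ext_iff, Fin.ext_iff]
          omega
      · show insert v2 ((((S \ rowPre n (i+1) j) ∪ rowPre n i j)).erase v1)
            = (S \ rowPre n (i+1) (j+1)) ∪ rowPre n i (j+1)
        ext ⟨x, y⟩
        by_cases hxy : (x, y) ∈ S <;>
          simp [hxy, hv1, hv2, Prod.ext_iff, Fin.ext_iff] <;> omega

theorem rowSweep {a b : ℕ} (ha : a < n) (hb : b < n)
    (H S₀ : Finset (Vtx n)) (hc : H.card + (b + 2) ≤ c)
    (hH : ∀ v ∈ H, ¬((v.1 : ℕ) ≤ a ∧ (v.2 : ℕ) ≤ b)) :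
    ∀ i, i ≤ a → Seg n c (H, S₀)
      (H ∪ rowPre n i b, (S₀ ∪ rectF n i b) \ rowPre n i b) := by
  intro i hi
  induction i with
  | zero =>
    refine (firstRow hb H S₀ hc b le_rfl).cast (Prod.ext_iff.2 ⟨rfl, ?_⟩)
    show S₀ \ rowPre n 0 b = (S₀ ∪ rectF n 0 b) \ rowPre n 0 b
    ext ⟨x, y⟩
    by_cases hxy : (x, y) ∈ S₀ <;> simp [hxy] <;> omega
  | succ i ih =>
    have hH' : ∀ v ∈ H, ¬((v.1 : ℕ) = i ∧ (v.2 : ℕ) ≤ b) := by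
      intro v hv
      have := hH v hv
      omega
    refine ((ih (by omega)).trans
      (((transSeg (by omega) hb H _ hc hH' b le_rfl)).cast (Prod.ext_iff.2 ⟨?_, ?_⟩)))
    · show H ∪ midSet n i b b = H ∪ rowPre n (i+1) b
      ext ⟨x, y⟩
      by_cases hxy : (x, y) ∈ H <;> simp [hxy] <;> omega
    · show ((S₀ ∪ rectF n i b) \ rowPre n i b) \ rowPre n (i+1) b ∪ rowPre n i b
          = (S₀ ∪ rectF n (i+1) b) \ rowPre n (i+1) b
      ext ⟨x, y⟩
      by_cases hxy : (x, y) ∈ S₀ <;> simp [hxy] <;> omega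

theorem sweepSeg {a b : ℕ} (ha : a < n) (hb : b < n)
    (H S₀ : Finset (Vtx n)) (hc : H.card + (b + 2) ≤ c)
    (hH : ∀ v ∈ H, ¬((v.1 : ℕ) ≤ a ∧ (v.2 : ℕ) ≤ b)) :
    Seg n c (H, S₀) (H ∪ gSet n a b, (S₀ ∪ rectF n a b) \ gSet n a b) := by
  match a, ha with
  | 0, ha =>
    refine (rowSweep ha hb H S₀ hc hH 0 le_rfl).cast (Prod.ext_iff.2 ⟨?_, ?_⟩)
    · show H ∪ rowPre n 0 b = H ∪ gSet n 0 b
      ext ⟨x, y⟩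
      by_cases hxy : (x, y) ∈ H <;> simp [hxy] <;> omega
    · show (S₀ ∪ rectF n 0 b) \ rowPre n 0 b = (S₀ ∪ rectF n 0 b) \ gSet n 0 b
      ext ⟨x, y⟩
      by_cases hxy : (x, y) ∈ S₀ <;> simp [hxy] <;> omega
  | (a' + 1), ha =>
    have ha' : a' < n := by omega
    have sweep := rowSweep (show a' + 1 < n from ha) hb H S₀ hc hH a' (by omega)
    match b, hb with
    | 0, hb =>
      set v : Vtx n := (⟨a' + 1, ha⟩, ⟨0, hb⟩) with hv
      have hpred : ∀ w, gridE n w v → w ∈ H ∪ rowPre n a' 0 := by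
        intro w hw
        rcases gridE_pred ha hb hw with ⟨h1, h2⟩ | ⟨h1, h2⟩
        · exact Finset.mem_union_right _ (by simp; omega)
        · omega
      have hc1 : (H ∪ rowPre n a' 0).card ≤ c := by
        have := cardU (H := H) (card_rowPre (n := n) (i := a') (j := 0))
        omega
      have hc2 : (insert v (H ∪ rowPre n a' 0)).card ≤ c := by
        have := Finset.card_insert_le v (H ∪ rowPre n a' 0)
        have := cardU (H := H) (card_rowPre (n := n) (i := a') (j := 0))
        omega
      refine sweep.trans ((Seg.single (ok_unghost v hpred) hc1 hc2).cast
        (Prod.ext_iff.2 ⟨?_, ?_⟩))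
      · show insert v (H ∪ rowPre n a' 0) = H ∪ gSet n (a'+1) 0
        ext ⟨x, y⟩
        by_cases hxy : (x, y) ∈ H <;> simp [hxy, hv, Prod.ext_iff, Fin.ext_iff] <;> omega
      · show ((S₀ ∪ rectF n a' 0) \ rowPre n a' 0).erase v
            = (S₀ ∪ rectF n (a'+1) 0) \ gSet n (a'+1) 0
        ext ⟨x, y⟩
        by_cases hxy : (x, y) ∈ S₀ <;> simp [hxy, hv, Prod.ext_iff, Fin.ext_iff] <;> omega
    | (b' + 1), hb =>
      have hH' : ∀ v ∈ H, ¬((v.1 : ℕ) = a' ∧ (v.2 : ℕ) ≤ b' + 1) := by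
        intro v hv
        have := hH v hv
        omega
      have tr := transSeg (show a' + 1 < n from ha) hb H
        ((S₀ ∪ rectF n a' (b'+1)) \ rowPre n a' (b'+1)) hc hH' b' (by omega)
      set v : Vtx n := (⟨a' + 1, ha⟩, ⟨b' + 1, hb⟩) with hv
      have hpred : ∀ w, gridE n w v → w ∈ H ∪ midSet n a' b' (b'+1) := by
        intro w hw
        rcases gridE_pred ha hb hw with ⟨h1, h2⟩ | ⟨h1, h2⟩
        · exact Finset.mem_union_right _ (by simp; omega)
        · exact Finset.mem_union_right _ (by simp; omega)
      have hc1 : (H ∪ midSet n a' b' (b'+1)).card ≤ c := by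
        have := cardU (H := H) (card_midSet (n := n) (i := a') (b := b'+1) (show b' ≤ b'+1 by omega))
        omega
      have hc2 : (insert v (H ∪ midSet n a' b' (b'+1))).card ≤ c := by
        have := Finset.card_insert_le v (H ∪ midSet n a' b' (b'+1))
        have := cardU (H := H) (card_midSet (n := n) (i := a') (b := b'+1) (show b' ≤ b'+1 by omega))
        omega
      refine (sweep.trans tr).trans ((Seg.single (ok_unghost v hpred) hc1 hc2).cast
        (Prod.ext_iff.2 ⟨?_, ?_⟩))
      · show insert v (H ∪ midSet n a' b' (b'+1)) = H ∪ gSet n (a'+1) (b'+1)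
        ext ⟨x, y⟩
        by_cases hxy : (x, y) ∈ H
        · have hne : ¬((x : ℕ) ≤ a' + 1 ∧ (y : ℕ) ≤ b' + 1) := hH (x, y) hxy
          simp [hxy, hv, Prod.ext_iff, Fin.ext_iff]
          try omega
        · simp [hxy, hv, Prod.ext_iff, Fin.ext_iff]
          omega
      · show ((((S₀ ∪ rectF n a' (b'+1)) \ rowPre n a' (b'+1)) \ rowPre n (a'+1) b')
              ∪ rowPre n a' b').erase v
            = (S₀ ∪ rectF n (a'+1) (b'+1)) \ gSet n (a'+1) (b'+1)
        ext ⟨x, y⟩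
        by_cases hxy : (x, y) ∈ S₀ <;> simp [hxy, hv, Prod.ext_iff, Fin.ext_iff] <;> omega

end Sweep

section Remove

variable {n c : ℕ}

theorem removeSeg {a b : ℕ} (ha : a < n) (hb : b < n)
    (H S₀ : Finset (Vtx n)) (hc : H.card + (b + 2) ≤ c)
    (hH : ∀ v ∈ H, ¬((v.1 : ℕ) ≤ a ∧ (v.2 : ℕ) ≤ b))
    (hsub : rectF n a b ⊆ S₀) :
    Seg n c (H, S₀) (H, S₀.erase (⟨a, ha⟩, ⟨b, hb⟩)) := by
  set v : Vtx n := (⟨a, ha⟩, ⟨b, hb⟩) with hv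
  have sweep := sweepSeg ha hb H S₀ hc hH
  have hpred : ∀ w, gridE n w v → w ∈ H ∪ gSet n a b := by
    intro w hw
    rcases gridE_pred ha hb hw with ⟨h1, h2⟩ | ⟨h1, h2⟩ <;>
      exact Finset.mem_union_right _ (by simp; omega)
  have hcG : (H ∪ gSet n a b).card ≤ c := by
    have := cardU (H := H) (card_gSet (n := n) (a := a) (b := b))
    omega
  have hcG2 : ((H ∪ gSet n a b).erase v).card ≤ c := le_trans Finset.card_erase_le hcG
  have m2 : Seg n c (H ∪ gSet n a b, (S₀ ∪ rectF n a b) \ gSet n a b)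
      ((H ∪ gSet n a b).erase v, (S₀ ∪ rectF n a b) \ gSet n a b) :=
    Seg.single (ok_unpebble v hpred) hcG hcG2
  have m3 := ghostAll (c := c) ((gSet n a b).erase v)
    ((H ∪ gSet n a b).erase v) ((S₀ ∪ rectF n a b) \ gSet n a b) hcG2
  refine (sweep.trans (m2.trans (m3.cast (Prod.ext_iff.2 ⟨?_, ?_⟩))))
  · show ((H ∪ gSet n a b).erase v) \ ((gSet n a b).erase v) = H
    ext ⟨x, y⟩
    by_cases hxy : (x, y) ∈ H
    · have hne : ¬((x : ℕ) ≤ a ∧ (y : ℕ) ≤ b) := hH (x, y) hxy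
      simp [hxy, hv, Prod.ext_iff, Fin.ext_iff]
      try omega
    · simp [hxy, hv, Prod.ext_iff, Fin.ext_iff]
      try omega
  · show ((S₀ ∪ rectF n a b) \ gSet n a b) ∪ ((gSet n a b).erase v) = S₀.erase v
    ext ⟨x, y⟩
    by_cases hxy : (x, y) ∈ S₀
    · simp [hxy, hv, Prod.ext_iff, Fin.ext_iff]
      try omega
    · have hrect : ¬((x : ℕ) ≤ a ∧ (y : ℕ) ≤ b) :=
        fun h => hxy (hsub (mem_rectF.2 h))
      simp [hxy, hv, Prod.ext_iff, Fin.ext_iff]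
      try omega

end Remove

section Swap

variable {n c : ℕ}

def swapSt (s : Stn n) : Stn n := (s.1.image Prod.swap, s.2.image Prod.swap)

theorem gridE_swap {a b : Vtx n} (h : gridE n a b) : gridE n a.swap b.swap := by
  rcases h with ⟨h1, h2⟩ | ⟨h1, h2⟩
  · exact Or.inr ⟨h2, h1⟩
  · exact Or.inl ⟨h2, h1⟩

theorem mem_image_swap {A : Finset (Vtx n)} {w : Vtx n} (h : w.swap ∈ A) :
    w ∈ A.image Prod.swap :=
  Finset.mem_image.2 ⟨w.swap, h, Prod.swap_swap w⟩

theorem ok_swap {s s' : Stn n} (h : Ok n s s') : Ok n (swapSt s) (swapSt s') := by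
  obtain ⟨v, h1 | h2 | h3 | h4⟩ := h
  all_goals simp only [swapSt]
  · refine ⟨v.swap, Or.inl ⟨?_, ?_, ?_⟩⟩
    · rw [show s'.1 = insert v s.1 from h1.1, Finset.image_insert]
    · rw [h1.2.1]
    · intro w hw
      exact mem_image_swap (h1.2.2 w.swap (by simpa using gridE_swap hw))
  · refine ⟨v.swap, Or.inr (Or.inl ⟨?_, ?_, ?_⟩)⟩
    · rw [show s'.1 = s.1.erase v from h2.1, Finset.image_erase Prod.swap_injective]
    · rw [h2.2.1]
    · intro w hw
      exact mem_image_swap (h2.2.2 w.swap (by simpa using gridE_swap hw))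
  · refine ⟨v.swap, Or.inr (Or.inr (Or.inl ⟨?_, ?_⟩))⟩
    · rw [show s'.1 = s.1.erase v from h3.1, Finset.image_erase Prod.swap_injective]
    · rw [show s'.2 = insert v s.2 from h3.2, Finset.image_insert]
  · refine ⟨v.swap, Or.inr (Or.inr (Or.inr ⟨?_, ?_, ?_⟩))⟩
    · rw [show s'.1 = insert v s.1 from h4.1, Finset.image_insert]
    · rw [show s'.2 = s.2.erase v from h4.2.1, Finset.image_erase Prod.swap_injective]
    · intro w hw
      exact mem_image_swap (h4.2.2 w.swap (by simpa using gridE_swap hw))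

theorem Seg.swap {s₀ s₁ : Stn n} (h : Seg n c s₀ s₁) :
    Seg n c (swapSt s₀) (swapSt s₁) := by
  obtain ⟨f, T, hf0, hfT, hstep, hcard⟩ := h
  refine ⟨fun t => swapSt (f t), T, by simp only [hf0], by simp only [hfT], ?_, ?_⟩
  · intro t ht
    exact ok_swap (hstep t ht)
  · intro t ht
    show ((f t).1.image Prod.swap).card ≤ c
    rw [Finset.card_image_of_injective _ Prod.swap_injective]
    exact hcard t ht

end Swap

section Cleanup

variable {n c : ℕ}

def rootV (n : ℕ) (hn : 0 < n) : Vtx n := (⟨n - 1, by omega⟩, ⟨n - 1, by omega⟩)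

theorem removeSegT (hn : 0 < n) {a b : ℕ} (ha : a < n) (hb : b < n)
    (S₀ : Finset (Vtx n)) (hc : 1 + (a + 2) ≤ c)
    (hroot : ¬(n - 1 ≤ a ∧ n - 1 ≤ b))
    (hsub : rectF n a b ⊆ S₀) :
    Seg n c ({rootV n hn}, S₀) ({rootV n hn}, S₀.erase (⟨a, ha⟩, ⟨b, hb⟩)) := by
  have hH : ∀ v ∈ ({rootV n hn} : Finset (Vtx n)), ¬((v.1 : ℕ) ≤ b ∧ (v.2 : ℕ) ≤ a) := by
    intro v hv
    rw [Finset.mem_singleton] at hv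
    subst hv
    show ¬(n - 1 ≤ b ∧ n - 1 ≤ a)
    omega
  have hsub' : rectF n b a ⊆ S₀.image Prod.swap := by
    intro v hv
    refine mem_image_swap (hsub ?_)
    simp only [mem_rectF] at hv ⊢
    exact ⟨hv.2, hv.1⟩
  have base := removeSeg hb ha ({rootV n hn}) (S₀.image Prod.swap)
    (by simpa using hc) hH hsub'
  have := base.swap
  have eswap : ∀ (X : Finset (Vtx n)), (X.image Prod.swap).image Prod.swap = X := by
    intro X
    rw [Finset.image_image]
    simp
  have hroot_swap : ({rootV n hn} : Finset (Vtx n)).image Prod.swap = {rootV n hn} := by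
    rw [Finset.image_singleton]
    rfl
  refine (this.cast ?_).cast' ?_
  · refine Prod.ext_iff.2 ⟨hroot_swap, ?_⟩
    show ((S₀.image Prod.swap).erase (⟨b, hb⟩, ⟨a, ha⟩)).image Prod.swap
        = S₀.erase (⟨a, ha⟩, ⟨b, hb⟩)
    rw [Finset.image_erase Prod.swap_injective, eswap]
    rfl
  · refine Prod.ext_iff.2 ⟨hroot_swap, eswap S₀⟩

theorem innerClean (hn : 2 ≤ n) {s : ℕ} (hs : s + 3 ≤ 2 * n) :
    ∀ k, Seg n (n + 1) ({rootV n (by omega)}, eSet n s k) ({rootV n (by omega)}, eSet n s 0) := by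
  intro k
  have hroot1 : ({rootV n (show 0 < n by omega)} : Finset (Vtx n)).card ≤ n + 1 := by
    simp <;> omega
  induction k with
  | zero => exact Seg.refl hroot1
  | succ k ih =>
    refine Seg.trans ?_ ih
    by_cases hcell : k < n ∧ k ≤ s ∧ s - k < n
    · have hk : k < n := hcell.1
      have hsk : s - k < n := hcell.2.2
      have ecast : (eSet n s (k + 1)).erase (⟨k, hk⟩, ⟨s - k, hsk⟩) = eSet n s k := by
        ext ⟨x, y⟩
        have hx := x.isLt
        have hy := y.isLt
        simp [Prod.ext_iff, Fin.ext_iff]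
        omega
      have hsub : rectF n k (s - k) ⊆ eSet n s (k + 1) := by
        intro v hv
        simp only [mem_rectF] at hv
        simp only [mem_eSet]
        omega
      by_cases hba : s - k ≤ k
      · have hH : ∀ v ∈ ({rootV n (show 0 < n by omega)} : Finset (Vtx n)),
            ¬((v.1 : ℕ) ≤ k ∧ (v.2 : ℕ) ≤ s - k) := by
          intro v hv
          rw [Finset.mem_singleton] at hv
          subst hv
          show ¬(n - 1 ≤ k ∧ n - 1 ≤ s - k)
          omega
        refine (removeSeg hk hsk _ _ ?_ hH hsub).cast (Prod.ext_iff.2 ⟨rfl, ecast⟩)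
        simp <;> omega
      · refine ((removeSegT (by omega) hk hsk _ ?_ ?_ hsub).cast
          (Prod.ext_iff.2 ⟨rfl, ecast⟩))
        · omega
        · omega
    · have ecast : eSet n s (k + 1) = eSet n s k := by
        ext ⟨x, y⟩
        have hx := x.isLt
        have hy := y.isLt
        simp only [mem_eSet]
        constructor <;> intro h <;> [skip; omega]
        omega
      exact (Seg.refl hroot1).cast (Prod.ext_iff.2 ⟨rfl, ecast⟩)

theorem outerClean (hn : 2 ≤ n) :
    ∀ s, s + 3 ≤ 2 * n →
      Seg n (n + 1) ({rootV n (by omega)}, eSet n s n) ({rootV n (by omega)}, ∅) := by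
  intro s
  induction s with
  | zero =>
    intro hs
    have e : eSet n 0 0 = (∅ : Finset (Vtx n)) := by
      ext ⟨x, y⟩
      simp only [mem_eSet, Finset.notMem_empty, iff_false]
      omega
    exact (innerClean hn hs n).cast (by rw [e])
  | succ s ih =>
    intro hs
    have e : eSet n (s + 1) 0 = eSet n s n := by
      ext ⟨x, y⟩
      have hx := x.isLt
      have hy := y.isLt
      simp only [mem_eSet]
      omega
    exact ((innerClean hn hs n).cast (by rw [e])).trans (ih (by omega))

theorem phase1 (hn : 2 ≤ n) :
    Seg n (n + 1) ((∅, ∅) : Stn n) ({rootV n (by omega)}, eSet n (2 * n - 3) n) := by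
  have h1 : n - 1 < n := by omega
  have sweep := sweepSeg (n := n) (c := n + 1) h1 h1 ∅ ∅ (by simp; omega) (by simp)
  have hcA : ((∅ : Finset (Vtx n)) ∪ gSet n (n-1) (n-1)).card ≤ n + 1 := by
    have := card_gSet (n := n) (a := n - 1) (b := n - 1)
    have := Finset.card_union_le (∅ : Finset (Vtx n)) (gSet n (n-1) (n-1))
    have he : (∅ : Finset (Vtx n)).card = 0 := Finset.card_empty
    omega
  have m2 := ghostAll (c := n + 1) ((gSet n (n-1) (n-1)).erase (rootV n (by omega)))
    ((∅ : Finset (Vtx n)) ∪ gSet n (n-1) (n-1))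
    ((∅ ∪ rectF n (n-1) (n-1)) \ gSet n (n-1) (n-1)) hcA
  refine sweep.trans (m2.cast (Prod.ext_iff.2 ⟨?_, ?_⟩))
  · show ((∅ : Finset (Vtx n)) ∪ gSet n (n-1) (n-1)) \ ((gSet n (n-1) (n-1)).erase (rootV n (by omega)))
        = {rootV n (by omega)}
    ext ⟨x, y⟩
    have hx := x.isLt
    have hy := y.isLt
    simp [rootV, Prod.ext_iff, Fin.ext_iff]
    omega
  · show ((∅ ∪ rectF n (n-1) (n-1)) \ gSet n (n-1) (n-1))
        ∪ ((gSet n (n-1) (n-1)).erase (rootV n (by omega))) = eSet n (2 * n - 3) n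
    ext ⟨x, y⟩
    have hx := x.isLt
    have hy := y.isLt
    simp [rootV, Prod.ext_iff, Fin.ext_iff]
    omega

theorem grand (hn : 2 ≤ n) :
    Seg n (n + 1) ((∅, ∅) : Stn n) ({rootV n (by omega)}, ∅) :=
  (phase1 hn).trans (outerClean hn (2 * n - 3) (by omega))

end Cleanup

theorem rootFinset_gridE {n : ℕ} (hn : 0 < n) :
    rootFinset (gridE n) = {rootV n hn} := by
  ext v
  rw [rootFinset, Set.Finite.mem_toFinset, Set.mem_setOf_eq, Finset.mem_singleton]
  constructor
  · intro h
    by_contra hne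
    have hv : ¬((v.1 : ℕ) = n - 1 ∧ (v.2 : ℕ) = n - 1) := by
      intro hc
      exact hne (Prod.ext_iff.2 ⟨Fin.ext hc.1, Fin.ext hc.2⟩)
    have h1 := v.1.isLt
    have h2 := v.2.isLt
    by_cases hx : (v.1 : ℕ) < n - 1
    · exact h (⟨(v.1 : ℕ) + 1, by omega⟩, v.2) (Or.inl ⟨by simp, rfl⟩)
    · have hy : (v.2 : ℕ) < n - 1 := by omega
      exact h (v.1, ⟨(v.2 : ℕ) + 1, by omega⟩) (Or.inr ⟨rfl, by simp⟩)
  · intro h w hw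
    subst h
    rcases hw with ⟨h1, _⟩ | ⟨_, h2⟩
    · have := w.1.isLt
      simp only [rootV] at h1
      omega
    · have := w.2.isLt
      simp only [rootV] at h2
      omega

end SpookyGrid

/-- For every `P ≥ 2` the grid DAG `G◇_P` has a spooky pebbling strategy
with pebbling cost at most `P + 1`. -/
theorem grid_spooky_upper (P : ℕ) (hP : 2 ≤ P) :
    ∃ (Pf Sf : ℕ → Finset (Fin P × Fin P)) (T : ℕ),
      IsSpookyStrategy (gridE P) Pf Sf T ∧ pebCost Pf T ≤ P + 1 := by
  obtain ⟨f, T, hf0, hfT, hstep, hcard⟩ := SpookyGrid.grand (n := P) hP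
  refine ⟨fun t => (f t).1, fun t => (f t).2, T, ⟨?_, ?_, ?_, ?_, ?_⟩, ?_⟩
  · simp only [hf0]
  · simp only [hf0]
  · simp only [hfT, SpookyGrid.rootFinset_gridE (show 0 < P by omega)]
  · simp only [hfT]
  · intro t h1 h2
    have h := hstep (t - 1) (by omega)
    have ht : t - 1 + 1 = t := by omega
    rw [ht] at h
    exact h
  · apply Finset.sup_le
    intro t ht
    rw [Finset.mem_range] at ht
    exact hcard t (by omega)
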